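/- There is a constant C₂ > 1 such that the following holds. If v ∈ ℝ^n has S scales and the size of the smallest scale is δ > 0, then for every a ∈ ℝ and every b ≥ 2, for x chosen uniformly at random from {0,1}^n, ℙ( |⟨x, v⟩ − a| < b·δ ) < C₂ · exp( −S/C₂ + C₂·log b ). -/

import Mathlib

open Finset

/-- The probability, over `x` chosen uniformly at random from `{0,1}^n`
(encoded as `Fin n → Fin 2`), of an event `E`. -/
noncomputable def cubeProb (n : ℕ) (E : Set (Fin n → Fin 2)) : ℝ :=
  (E.ncard : ℝ) / 2 ^ n

/-- The `ℓ₂`-norm of the restriction of `v` to the coordinates in `P`. -/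
noncomputable def scaleNorm {n : ℕ} (v : Fin n → ℝ) (P : Finset (Fin n)) : ℝ :=
  Real.sqrt (∑ j ∈ P, v j ^ 2)

/-- The vector `v` has `S` scales on the coordinate set `A`, witnessed by the
partition `A = P 0 ∪ … ∪ P (S-1)`: `‖v^(s)‖₂ ≥ C₁ ‖v^(s+1)‖₂` for every `s < S - 1`,
where `C₁ = 4 · 4.706²`. The smallest scale is `v^(S-1)`, its position is `P (S-1)`
and its size is `scaleNorm v (P (S-1))`. -/
def HasScalesOn {n : ℕ} (v : Fin n → ℝ) (A : Finset (Fin n)) (S : ℕ)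
    (P : ℕ → Finset (Fin n)) : Prop :=
  (∀ s < S, P s ⊆ A) ∧
  (∀ j ∈ A, ∃! s : ℕ, s < S ∧ j ∈ P s) ∧
  (∀ s : ℕ, s + 1 < S →
    scaleNorm v (P s) ≥ (4 * (4.706 : ℝ) ^ 2) * scaleNorm v (P (s + 1)))


set_option linter.unusedSectionVars false
set_option maxHeartbeats 1000000

namespace AntiAux

variable {ι : Type*} [Fintype ι] [DecidableEq ι]

/-- centered weighted sum over a subset of coordinates. -/
noncomputable def Wf (c : ι → ℝ) (D : Finset ι) (ε : ι → Fin 2) : ℝ :=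
  ∑ j ∈ D, ((ε j : ℝ) - 1/2) * c j

lemma fin2_one_sub_cast : ∀ b : Fin 2, ((1 - b : Fin 2) : ℝ) = 1 - (b : ℝ) := by
  intro b
  have h : ((1 - b : Fin 2) : ℕ) = 1 - (b : ℕ) := by
    revert b; decide
  have hb : (b : ℕ) ≤ 1 := by omega
  rw [show ((1 - b : Fin 2) : ℝ) = (((1 - b : Fin 2) : ℕ) : ℝ) from rfl, h]
  push_cast [hb]
  ring

/-- flipping one coordinate -/
def flip1 (j₀ : ι) : (ι → Fin 2) ≃ (ι → Fin 2) :=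
  Function.Involutive.toPerm (fun x => Function.update x j₀ (1 - x j₀)) (by
    intro x
    funext j
    by_cases h : j = j₀
    · subst h
      simp only [Function.update_self]
      have : ∀ b : Fin 2, 1 - (1 - b) = b := by decide
      exact this _
    · simp [Function.update_of_ne h])

lemma flip1_apply_self (j₀ : ι) (ε : ι → Fin 2) : (flip1 j₀) ε j₀ = 1 - ε j₀ := by
  simp [flip1, Function.Involutive.toPerm, Function.update_self]

lemma flip1_apply_ne (j₀ : ι) (ε : ι → Fin 2) {j : ι} (h : j ≠ j₀) :
    (flip1 j₀) ε j = ε j := by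
  simp [flip1, Function.Involutive.toPerm, Function.update_of_ne h]

lemma sum_flip_mul (c : ι → ℝ) (D : Finset ι) {j₀ : ι} (hj : j₀ ∉ D) (F : ℝ → ℝ) :
    ∑ ε : ι → Fin 2, ((ε j₀ : ℝ) - 1/2) * F (Wf c D ε) = 0 := by
  have key : ∀ ε : ι → Fin 2,
      ((((flip1 j₀) ε) j₀ : ℝ) - 1/2) * F (Wf c D ((flip1 j₀) ε))
        = -(((ε j₀ : ℝ) - 1/2) * F (Wf c D ε)) := by
    intro ε
    have h2 : Wf c D ((flip1 j₀) ε) = Wf c D ε := by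
      unfold Wf
      refine Finset.sum_congr rfl (fun j hjD => ?_)
      rw [flip1_apply_ne j₀ ε (fun h => hj (h ▸ hjD))]
    rw [flip1_apply_self, h2, fin2_one_sub_cast]
    ring
  have hcomp := Equiv.sum_comp (flip1 j₀)
    (fun ε => ((ε j₀ : ℝ) - 1/2) * F (Wf c D ε))
  have h2 : ∑ ε : ι → Fin 2, ((ε j₀ : ℝ) - 1/2) * F (Wf c D ε)
      = -∑ ε : ι → Fin 2, ((ε j₀ : ℝ) - 1/2) * F (Wf c D ε) := by
    calc ∑ ε : ι → Fin 2, ((ε j₀ : ℝ) - 1/2) * F (Wf c D ε)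
        = ∑ ε : ι → Fin 2, ((((flip1 j₀) ε) j₀ : ℝ) - 1/2) * F (Wf c D ((flip1 j₀) ε)) := by
          rw [← hcomp]
      _ = ∑ ε : ι → Fin 2, -(((ε j₀ : ℝ) - 1/2) * F (Wf c D ε)) :=
          Finset.sum_congr rfl (fun ε _ => key ε)
      _ = -∑ ε : ι → Fin 2, ((ε j₀ : ℝ) - 1/2) * F (Wf c D ε) := by
          simp
  linarith

lemma fin2_center_sq : ∀ b : Fin 2, ((b : ℝ) - 1/2)^2 = 1/4 := by
  intro b; fin_cases b <;> norm_num

lemma card_fun2 : Fintype.card (ι → Fin 2) = 2 ^ (Fintype.card ι) := by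
  simp [Fintype.card_fun]

lemma sum_Wf_sq (c : ι → ℝ) (D : Finset ι) :
    ∑ ε : ι → Fin 2, (Wf c D ε)^2 = 2^(Fintype.card ι) * (∑ j ∈ D, (c j)^2)/4 := by
  classical
  induction D using Finset.induction_on with
  | empty => simp [Wf]
  | @insert j₀ D hj ih =>
    have hW : ∀ ε : ι → Fin 2, Wf c (insert j₀ D) ε
        = ((ε j₀ : ℝ) - 1/2) * c j₀ + Wf c D ε := by
      intro ε; unfold Wf; rw [Finset.sum_insert hj]
    have expand : ∀ ε : ι → Fin 2, (Wf c (insert j₀ D) ε)^2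
        = (c j₀)^2/4 + 2 * c j₀ * (((ε j₀ : ℝ) - 1/2) * (Wf c D ε)) + (Wf c D ε)^2 := by
      intro ε
      rw [hW ε]
      have hv : ((ε j₀ : ℕ) = 0) ∨ ((ε j₀ : ℕ) = 1) := by omega
      rcases hv with hv | hv <;> rw [hv] <;> push_cast <;> ring
    have hz1 : ∑ ε : ι → Fin 2, ((ε j₀ : ℝ) - 1/2) * (Wf c D ε) = 0 :=
      sum_flip_mul c D hj id
    calc ∑ ε : ι → Fin 2, (Wf c (insert j₀ D) ε)^2
        = (∑ _ε : ι → Fin 2, (c j₀)^2/4)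
            + (2 * c j₀) * (∑ ε : ι → Fin 2, ((ε j₀ : ℝ) - 1/2) * (Wf c D ε))
            + ∑ ε : ι → Fin 2, (Wf c D ε)^2 := by
          rw [Finset.sum_congr rfl (fun ε _ => expand ε), Finset.sum_add_distrib,
            Finset.sum_add_distrib, Finset.mul_sum]
      _ = 2^(Fintype.card ι) * (∑ j ∈ insert j₀ D, (c j)^2)/4 := by
          rw [hz1, ih, Finset.sum_const, Finset.card_univ, card_fun2,
            Finset.sum_insert hj, nsmul_eq_mul]
          push_cast
          ring

lemma sum_Wf_four (c : ι → ℝ) (D : Finset ι) :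
    ∑ ε : ι → Fin 2, (Wf c D ε)^4 ≤ 2^(Fintype.card ι) * 3 * ((∑ j ∈ D, (c j)^2)/4)^2 := by
  classical
  induction D using Finset.induction_on with
  | empty => simp [Wf]
  | @insert j₀ D hj ih =>
    have hW : ∀ ε : ι → Fin 2, Wf c (insert j₀ D) ε
        = ((ε j₀ : ℝ) - 1/2) * c j₀ + Wf c D ε := by
      intro ε; unfold Wf; rw [Finset.sum_insert hj]
    have expand : ∀ ε : ι → Fin 2, (Wf c (insert j₀ D) ε)^4
        = (c j₀)^4/16 + (3/2) * (c j₀)^2 * (Wf c D ε)^2 + (Wf c D ε)^4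
          + ((c j₀)^3 * (((ε j₀ : ℝ) - 1/2) * (Wf c D ε))
             + 4 * c j₀ * (((ε j₀ : ℝ) - 1/2) * (Wf c D ε)^3)) := by
      intro ε
      rw [hW ε]
      have hv : ((ε j₀ : ℕ) = 0) ∨ ((ε j₀ : ℕ) = 1) := by omega
      rcases hv with hv | hv <;> rw [hv] <;> push_cast <;> ring
    have hsum : ∑ ε : ι → Fin 2, (Wf c (insert j₀ D) ε)^4
        = (∑ _ε : ι → Fin 2, (c j₀)^4/16)
          + (3/2) * (c j₀)^2 * (∑ ε : ι → Fin 2, (Wf c D ε)^2)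
          + (∑ ε : ι → Fin 2, (Wf c D ε)^4)
          + ((c j₀)^3 * (∑ ε : ι → Fin 2, ((ε j₀ : ℝ) - 1/2) * (Wf c D ε))
             + 4 * c j₀ * (∑ ε : ι → Fin 2, ((ε j₀ : ℝ) - 1/2) * ((Wf c D ε)^3))) := by
      rw [Finset.sum_congr rfl (fun ε _ => expand ε)]
      rw [Finset.sum_add_distrib, Finset.sum_add_distrib, Finset.sum_add_distrib,
        Finset.sum_add_distrib, Finset.mul_sum, Finset.mul_sum, Finset.mul_sum]
    have hz1 : ∑ ε : ι → Fin 2, ((ε j₀ : ℝ) - 1/2) * (Wf c D ε) = 0 :=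
      sum_flip_mul c D hj id
    have hz3 : ∑ ε : ι → Fin 2, ((ε j₀ : ℝ) - 1/2) * ((Wf c D ε)^3) = 0 :=
      sum_flip_mul c D hj (fun t => t^3)
    rw [hsum, hz1, hz3, sum_Wf_sq, Finset.sum_const, Finset.card_univ, card_fun2,
      Finset.sum_insert hj, nsmul_eq_mul]
    have h2 : (0:ℝ) ≤ (2:ℝ)^(Fintype.card ι) := by positivity
    have hQ : (0:ℝ) ≤ ∑ j ∈ D, (c j)^2 := Finset.sum_nonneg (fun j _ => sq_nonneg _)
    push_cast
    nlinarith [ih, mul_nonneg h2 (sq_nonneg ((c j₀)^2)), mul_nonneg (mul_nonneg h2 (sq_nonneg (c j₀))) hQ]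

/-- Chebyshev-type bound. -/
lemma card_dev_le (c : ι → ℝ) {τ : ℝ} (hτ : 0 < τ) :
    ((univ.filter fun ε : ι → Fin 2 => τ < |Wf c univ ε|).card : ℝ)
      ≤ (∑ j, (c j)^2) / (4 * τ^2) * 2^(Fintype.card ι) := by
  classical
  set T := univ.filter fun ε : ι → Fin 2 => τ < |Wf c univ ε| with hT
  have h1 : (T.card : ℝ) * τ^2 ≤ ∑ ε ∈ T, (Wf c univ ε)^2 := by
    have : ∀ ε ∈ T, τ^2 ≤ (Wf c univ ε)^2 := by
      intro ε hε
      have h := (Finset.mem_filter.mp hε).2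
      have h2 := sq_abs (Wf c univ ε)
      nlinarith [abs_nonneg (Wf c univ ε)]
    calc (T.card : ℝ) * τ^2 = ∑ _ε ∈ T, τ^2 := by rw [Finset.sum_const, nsmul_eq_mul]
      _ ≤ ∑ ε ∈ T, (Wf c univ ε)^2 := Finset.sum_le_sum this
  have h2 : ∑ ε ∈ T, (Wf c univ ε)^2 ≤ ∑ ε : ι → Fin 2, (Wf c univ ε)^2 :=
    Finset.sum_le_sum_of_subset_of_nonneg (Finset.filter_subset _ _)
      (fun ε _ _ => sq_nonneg _)
  rw [sum_Wf_sq] at h2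
  have := h1.trans h2
  rw [div_mul_eq_mul_div, le_div_iff₀ (by positivity)]
  calc ((T.card:ℝ)) * (4 * τ^2) = ((T.card:ℝ) * τ^2) * 4 := by ring
    _ ≤ (2^(Fintype.card ι) * (∑ j, (c j)^2)/4) * 4 := by linarith
    _ = (∑ j, (c j)^2) * 2^(Fintype.card ι) := by ring

/-- Paley–Zygmund-type bound. -/
lemma card_sq_large (c : ι → ℝ) :
    (3/16) * 2^(Fintype.card ι)
      ≤ ((univ.filter fun ε : ι → Fin 2 => (∑ j, (c j)^2)/16 ≤ (Wf c univ ε)^2).card : ℝ) := by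
  classical
  set q := ∑ j, (c j)^2 with hqdef
  have hq0 : 0 ≤ q := Finset.sum_nonneg (fun j _ => sq_nonneg _)
  set T := univ.filter fun ε : ι → Fin 2 => q/16 ≤ (Wf c univ ε)^2 with hT
  set K := (2:ℝ)^(Fintype.card ι) with hK
  have hK0 : 0 < K := by positivity
  -- lower bound for sum over T
  have hTuniv : ∑ ε ∈ T, (Wf c univ ε)^2 = K * q / 4 - ∑ ε ∈ Tᶜ, (Wf c univ ε)^2 := by
    have := Finset.sum_add_sum_compl T (fun ε => (Wf c univ ε)^2)
    rw [sum_Wf_sq c univ] at this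
    linarith [this]
  have hcompl : ∑ ε ∈ Tᶜ, (Wf c univ ε)^2 ≤ K * q / 16 := by
    have hmem : ∀ ε ∈ Tᶜ, (Wf c univ ε)^2 ≤ q/16 := by
      intro ε hε
      have : ¬ (q/16 ≤ (Wf c univ ε)^2) := by
        simpa [hT] using (Finset.mem_compl.mp hε)
      linarith
    calc ∑ ε ∈ Tᶜ, (Wf c univ ε)^2 ≤ ∑ _ε ∈ Tᶜ, q/16 := Finset.sum_le_sum hmem
      _ = (Tᶜ.card : ℝ) * (q/16) := by rw [Finset.sum_const, nsmul_eq_mul]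
      _ ≤ K * q / 16 := by
          have : (Tᶜ.card : ℝ) ≤ K := by
            have h1 : Tᶜ.card ≤ Fintype.card (ι → Fin 2) := Finset.card_le_univ _
            rw [card_fun2] at h1
            rw [hK]
            exact_mod_cast h1
          nlinarith [hq0]
  have hTlow : (3/16) * (K * q) ≤ ∑ ε ∈ T, (Wf c univ ε)^2 := by
    rw [hTuniv]; linarith
  -- Cauchy–Schwarz
  have hCS : (∑ ε ∈ T, (Wf c univ ε)^2)^2
      ≤ (T.card : ℝ) * ∑ ε ∈ T, (Wf c univ ε)^4 := by
    have hcs := Finset.sum_mul_sq_le_sq_mul_sq T (fun _ => (1:ℝ)) (fun ε => (Wf c univ ε)^2)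
    simp only [one_mul, one_pow, Finset.sum_const, nsmul_eq_mul, mul_one] at hcs
    have hrw : ∀ ε, ((Wf c univ ε)^2)^2 = (Wf c univ ε)^4 := fun ε => by ring
    simp_rw [hrw] at hcs
    linarith [hcs]
  have hfour : ∑ ε ∈ T, (Wf c univ ε)^4 ≤ K * 3 * (q/4)^2 := by
    refine le_trans (Finset.sum_le_sum_of_subset_of_nonneg (Finset.filter_subset _ _)
      (fun ε _ _ => by positivity)) ?_
    exact sum_Wf_four c univ
  rcases eq_or_lt_of_le hq0 with hq | hq
  · -- q = 0 : every ε is in T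
    have : T = univ := by
      apply Finset.eq_univ_of_forall
      intro ε
      simp only [hT, Finset.mem_filter, Finset.mem_univ, true_and]
      nlinarith [sq_nonneg (Wf c univ ε)]
    rw [this]
    rw [Finset.card_univ, card_fun2]
    push_cast
    nlinarith [hK0]
  · -- q > 0
    have hTcard : (3/16) * K ≤ (T.card : ℝ) := by
      have h1 : ((3/16) * (K * q))^2 ≤ (T.card:ℝ) * (K * 3 * (q/4)^2) := by
        calc ((3/16) * (K * q))^2 ≤ (∑ ε ∈ T, (Wf c univ ε)^2)^2 := by
              have h0 : 0 ≤ (3/16) * (K*q) := by positivity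
              nlinarith [hTlow]
          _ ≤ (T.card : ℝ) * ∑ ε ∈ T, (Wf c univ ε)^4 := hCS
          _ ≤ (T.card : ℝ) * (K * 3 * (q/4)^2) := by
              have : (0:ℝ) ≤ (T.card:ℝ) := Nat.cast_nonneg _
              nlinarith [hfour]
      nlinarith [hK0, hq, sq_nonneg q, mul_pos hK0 (mul_pos hq hq)]
    exact hTcard

/-- flipping all coordinates -/
def flipAll : (ι → Fin 2) ≃ (ι → Fin 2) :=
  Function.Involutive.toPerm (fun x j => 1 - x j) (by
    intro x
    funext j
    have : ∀ b : Fin 2, 1 - (1 - b) = b := by decide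
    exact this _)

lemma Wf_flipAll (c : ι → ℝ) (ε : ι → Fin 2) :
    Wf c univ (flipAll ε) = - Wf c univ ε := by
  unfold Wf
  rw [← Finset.sum_neg_distrib]
  refine Finset.sum_congr rfl (fun j _ => ?_)
  have : (flipAll ε) j = 1 - ε j := rfl
  rw [this, fin2_one_sub_cast]
  ring

lemma card_tail_sym (c : ι → ℝ) (r : ℝ) :
    (univ.filter fun ε : ι → Fin 2 => r ≤ Wf c univ ε).card
      = (univ.filter fun ε : ι → Fin 2 => Wf c univ ε ≤ -r).card := by
  classical
  apply Finset.card_equiv flipAll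
  intro ε
  simp only [Finset.mem_filter, Finset.mem_univ, true_and]
  rw [Wf_flipAll]
  constructor <;> intro h <;> linarith

/-- each tail has mass at least 3/32. -/
lemma card_tail_low (c : ι → ℝ) (hq : 0 < ∑ j, (c j)^2) :
    (3/32) * 2^(Fintype.card ι)
      ≤ ((univ.filter fun ε : ι → Fin 2 => Wf c univ ε ≤ -(Real.sqrt (∑ j, (c j)^2)/4)).card : ℝ) := by
  classical
  set q := ∑ j, (c j)^2 with hqdef
  set r := Real.sqrt q / 4 with hrdef
  have hr0 : 0 < r := by
    have := Real.sqrt_pos.mpr hq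
    positivity
  have hr2 : r^2 = q/16 := by
    rw [hrdef]
    rw [div_pow, Real.sq_sqrt hq.le]
    norm_num
  -- the set where W^2 is large splits into the two tails
  have hsubset : (univ.filter fun ε : ι → Fin 2 => q/16 ≤ (Wf c univ ε)^2)
      ⊆ (univ.filter fun ε : ι → Fin 2 => r ≤ Wf c univ ε)
        ∪ (univ.filter fun ε : ι → Fin 2 => Wf c univ ε ≤ -r) := by
    intro ε hε
    have h := (Finset.mem_filter.mp hε).2
    rw [Finset.mem_union, Finset.mem_filter, Finset.mem_filter]
    rcases le_or_gt r (Wf c univ ε) with h1 | h1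
    · exact Or.inl ⟨Finset.mem_univ _, h1⟩
    · refine Or.inr ⟨Finset.mem_univ _, ?_⟩
      nlinarith [h, hr2, hr0]
  have hcard : (3/16) * 2^(Fintype.card ι)
      ≤ ((univ.filter fun ε : ι → Fin 2 => r ≤ Wf c univ ε).card : ℝ)
        + ((univ.filter fun ε : ι → Fin 2 => Wf c univ ε ≤ -r).card : ℝ) := by
    have h1 := card_sq_large c
    have h2 := Finset.card_le_card hsubset
    have h3 := Finset.card_union_le
      (univ.filter fun ε : ι → Fin 2 => r ≤ Wf c univ ε)
      (univ.filter fun ε : ι → Fin 2 => Wf c univ ε ≤ -r)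
    have := le_trans h2 h3
    calc (3/16) * (2:ℝ)^(Fintype.card ι)
        ≤ ((univ.filter fun ε : ι → Fin 2 => q/16 ≤ (Wf c univ ε)^2).card : ℝ) := h1
      _ ≤ _ := by exact_mod_cast this
  rw [card_tail_sym c r] at hcard
  linarith

/-- Main interval bound (Lemma A): any open interval of radius `√q/4` misses
at least `3/32` of the cube. -/
lemma card_interval_le (c : ι → ℝ) (hq : 0 < ∑ j, (c j)^2) (t : ℝ) :
    ((univ.filter fun ε : ι → Fin 2 =>
        |Wf c univ ε - t| < Real.sqrt (∑ j, (c j)^2)/4).card : ℝ)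
      ≤ (29/32) * 2^(Fintype.card ι) := by
  classical
  set q := ∑ j, (c j)^2 with hqdef
  set r := Real.sqrt q / 4 with hrdef
  have hr0 : 0 < r := by
    have := Real.sqrt_pos.mpr hq
    positivity
  rcases le_or_gt 0 t with ht | ht
  · -- interval misses lower tail
    have hdisj : Disjoint (univ.filter fun ε : ι → Fin 2 => |Wf c univ ε - t| < r)
        (univ.filter fun ε : ι → Fin 2 => Wf c univ ε ≤ -r) := by
      rw [Finset.disjoint_left]
      intro ε h1 h2
      simp only [Finset.mem_filter, Finset.mem_univ, true_and] at h1 h2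
      have := abs_lt.mp h1
      linarith [this.1]
    have hunion := Finset.card_union_of_disjoint hdisj
    have hle : (univ.filter fun ε : ι → Fin 2 => |Wf c univ ε - t| < r).card
        + (univ.filter fun ε : ι → Fin 2 => Wf c univ ε ≤ -r).card ≤ 2^(Fintype.card ι) := by
      rw [← hunion]
      calc _ ≤ Fintype.card (ι → Fin 2) := Finset.card_le_univ _
        _ = 2^(Fintype.card ι) := card_fun2
    have htail := card_tail_low c hq
    have : ((univ.filter fun ε : ι → Fin 2 => |Wf c univ ε - t| < r).card : ℝ)
        + ((univ.filter fun ε : ι → Fin 2 => Wf c univ ε ≤ -r).card : ℝ)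
          ≤ 2^(Fintype.card ι) := by exact_mod_cast hle
    linarith
  · -- interval misses upper tail
    have hdisj : Disjoint (univ.filter fun ε : ι → Fin 2 => |Wf c univ ε - t| < r)
        (univ.filter fun ε : ι → Fin 2 => r ≤ Wf c univ ε) := by
      rw [Finset.disjoint_left]
      intro ε h1 h2
      simp only [Finset.mem_filter, Finset.mem_univ, true_and] at h1 h2
      have := abs_lt.mp h1
      linarith [this.2]
    have hunion := Finset.card_union_of_disjoint hdisj
    have hle : (univ.filter fun ε : ι → Fin 2 => |Wf c univ ε - t| < r).card
        + (univ.filter fun ε : ι → Fin 2 => r ≤ Wf c univ ε).card ≤ 2^(Fintype.card ι) := by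
      rw [← hunion]
      calc _ ≤ Fintype.card (ι → Fin 2) := Finset.card_le_univ _
        _ = 2^(Fintype.card ι) := card_fun2
    have htail := card_tail_low c hq
    rw [← card_tail_sym c r] at htail
    have : ((univ.filter fun ε : ι → Fin 2 => |Wf c univ ε - t| < r).card : ℝ)
        + ((univ.filter fun ε : ι → Fin 2 => r ≤ Wf c univ ε).card : ℝ)
          ≤ 2^(Fintype.card ι) := by exact_mod_cast hle
    linarith

/-- counting a cylinder-restricted event by its trace on the coordinates in `Q`. -/
lemma card_cyl_le {n : ℕ} (Q : Finset (Fin n)) (y : Fin n → Fin 2)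
    (pred : (Fin n → Fin 2) → Prop) [DecidablePred pred]
    (T : Finset ({j // j ∈ Q} → Fin 2))
    (hT : ∀ x : Fin n → Fin 2, (∀ j ∉ Q, x j = y j) → pred x →
      (fun j : {j // j ∈ Q} => x j.1) ∈ T) :
    (univ.filter fun x : Fin n → Fin 2 => pred x ∧ ∀ j ∉ Q, x j = y j).card ≤ T.card := by
  classical
  apply Finset.card_le_card_of_injOn (fun x => fun j : {j // j ∈ Q} => x j.1)
  · intro x hx
    simp only [Finset.coe_filter, Finset.mem_filter, Finset.mem_univ, true_and, Set.mem_setOf_eq] at hx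
    exact hT x hx.2 hx.1
  · intro x₁ h₁ x₂ h₂ heq
    simp only [Finset.coe_filter, Set.mem_setOf_eq] at h₁ h₂
    funext j
    by_cases hj : j ∈ Q
    · exact congrFun heq ⟨j, hj⟩
    · rw [h₁.2.2 j hj, h₂.2.2 j hj]

/-- a full cylinder has at least `2 ^ |Q|` points. -/
lemma le_card_cyl {n : ℕ} (Q : Finset (Fin n)) (y : Fin n → Fin 2)
    (s : Finset (Fin n → Fin 2))
    (hs : ∀ x : Fin n → Fin 2, (∀ j ∉ Q, x j = y j) → x ∈ s) :
    2 ^ Q.card ≤ s.card := by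
  classical
  have h := Finset.card_le_card_of_injOn
    (f := fun u : {j // j ∈ Q} → Fin 2 => fun j : Fin n =>
      if h : j ∈ Q then u ⟨j, h⟩ else y j)
    (s := (univ : Finset ({j // j ∈ Q} → Fin 2))) (t := s)
    (by
      intro u _
      apply hs
      intro j hj
      simp [dif_neg hj])
    (by
      intro u₁ _ u₂ _ heq
      funext j
      have := congrFun heq j.1
      simpa [dif_pos j.2] using this)
  calc 2 ^ Q.card = Fintype.card ({j // j ∈ Q} → Fin 2) := by
        simp [Fintype.card_fun, Fintype.card_coe]
    _ = (univ : Finset ({j // j ∈ Q} → Fin 2)).card := Finset.card_univ.symm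
    _ ≤ s.card := h

/-- The sequential peeling lemma. -/
lemma peel {n : ℕ} (m : ℕ) (Q : ℕ → Finset (Fin n))
    (E : ℕ → (Fin n → Fin 2) → Prop) [∀ i, DecidablePred (E i)]
    (p : ℕ → ℝ) (hp : ∀ i < m, 0 ≤ p i)
    (hdep : ∀ i < m, ∀ x x' : Fin n → Fin 2,
      (∀ j : Fin n, (∀ k, k < m → i < k → j ∉ Q k) → x j = x' j) → E i x → E i x')
    (hcond : ∀ i < m, ∀ y : Fin n → Fin 2,
      ((univ.filter fun x : Fin n → Fin 2 => E i x ∧ ∀ j ∉ Q i, x j = y j).card : ℝ)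
        ≤ p i * 2 ^ (Q i).card) :
    ((univ.filter fun x : Fin n → Fin 2 => ∀ i < m, E i x).card : ℝ)
      ≤ (∏ i ∈ range m, p i) * 2 ^ n := by
  classical
  induction m with
  | zero =>
    simp only [Nat.not_lt_zero, false_implies, implies_true, Finset.filter_true,
      Finset.range_zero, Finset.prod_empty, one_mul]
    rw [Finset.card_univ]
    rw [Fintype.card_fun]
    simp
  | succ m ih =>
    set φ : (Fin n → Fin 2) → (Fin n → Fin 2) :=
      fun x j => if j ∈ Q m then 0 else x j with hφ
    set A := univ.filter (fun x : Fin n → Fin 2 => ∀ i < m + 1, E i x) with hA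
    set B := univ.filter (fun x : Fin n → Fin 2 => ∀ i < m, E i x) with hB
    set img := A.image φ with himg
    -- fibers of φ over img are big and consist of points satisfying the first m events
    have fiber_in_B : ∀ y ∈ img, ∀ x : Fin n → Fin 2, φ x = y → x ∈ B := by
      intro y hy x hxy
      obtain ⟨x₀, hx₀A, hx₀y⟩ := Finset.mem_image.mp hy
      simp only [hA, Finset.mem_filter, Finset.mem_univ, true_and] at hx₀A
      simp only [hB, Finset.mem_filter, Finset.mem_univ, true_and]
      intro i hi
      refine hdep i (Nat.lt_succ_of_lt hi) x₀ x ?_ (hx₀A i (Nat.lt_succ_of_lt hi))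
      intro j hj
      have hjQ : j ∉ Q m := hj m (Nat.lt_succ_self m) hi
      have h1 : φ x₀ j = x₀ j := by simp [hφ, if_neg hjQ]
      have h2 : φ x j = x j := by simp [hφ, if_neg hjQ]
      rw [← h1, ← h2, hx₀y, hxy]
    -- main fiber decomposition of A
    have hAcard : A.card = ∑ y ∈ img, (A.filter fun x => φ x = y).card :=
      Finset.card_eq_sum_card_fiberwise (fun x hx => Finset.mem_image_of_mem φ hx)
    -- each fiber of A is inside a conditional slice
    have hfib_le : ∀ y ∈ img, ((A.filter fun x => φ x = y).card : ℝ) ≤ p m * 2 ^ (Q m).card := by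
      intro y hy
      refine le_trans ?_ (hcond m (Nat.lt_succ_self m) y)
      have hsub : A.filter (fun x => φ x = y)
          ⊆ univ.filter (fun x : Fin n → Fin 2 => E m x ∧ ∀ j ∉ Q m, x j = y j) := by
        intro x hx
        simp only [Finset.mem_filter, Finset.mem_univ, true_and, hA] at hx ⊢
        refine ⟨hx.1 m (Nat.lt_succ_self m), ?_⟩
        intro j hj
        rw [← hx.2]
        simp [hφ, if_neg hj]
      exact_mod_cast Nat.cast_le.mpr (Finset.card_le_card hsub)
    -- cardinality of B dominates (img.card) * 2^(Q m).card
    have hBge : (img.card : ℝ) * 2 ^ (Q m).card ≤ (B.card : ℝ) := by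
      have key : ∑ y ∈ img, (B.filter fun x => φ x = y).card ≤ B.card := by
        set s := B.filter (fun x => φ x ∈ img) with hs
        have h1 : s.card = ∑ y ∈ img, (s.filter fun x => φ x = y).card :=
          Finset.card_eq_sum_card_fiberwise (fun x hx => (Finset.mem_filter.mp hx).2)
        have h2 : ∀ y ∈ img, (B.filter fun x => φ x = y) = (s.filter fun x => φ x = y) := by
          intro y hy
          ext x
          simp only [hs, Finset.mem_filter, and_assoc]
          constructor
          · rintro ⟨hxB, hxy⟩
            exact ⟨hxB, hxy ▸ hy, hxy⟩
          · rintro ⟨hxB, _, hxy⟩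
            exact ⟨hxB, hxy⟩
        rw [Finset.sum_congr rfl (fun y hy => by rw [h2 y hy] : ∀ y ∈ img, (B.filter fun x => φ x = y).card = (s.filter fun x => φ x = y).card), ← h1]
        exact Finset.card_le_card (Finset.filter_subset _ _)
      have hlow : ∀ y ∈ img, 2 ^ (Q m).card ≤ (B.filter fun x => φ x = y).card := by
        intro y hy
        obtain ⟨x₀, _, hx₀y⟩ := Finset.mem_image.mp hy
        apply le_card_cyl (Q m) y
        intro x hx
        -- construct: x agrees with y off Q m; then φ x = y and x ∈ B
        have hφx : φ x = y := by
          funext j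
          by_cases hj : j ∈ Q m
          · have : y j = 0 := by
              rw [← hx₀y]; simp [hφ, if_pos hj]
            simp [hφ, if_pos hj, this]
          · simp only [hφ, if_neg hj]
            exact hx j hj
        simp only [Finset.mem_filter]
        exact ⟨fiber_in_B y hy x hφx, hφx⟩
      calc (img.card : ℝ) * 2 ^ (Q m).card = ∑ _y ∈ img, (2:ℝ) ^ (Q m).card := by
            rw [Finset.sum_const, nsmul_eq_mul]
        _ ≤ ∑ y ∈ img, ((B.filter fun x => φ x = y).card : ℝ) := by
            refine Finset.sum_le_sum (fun y hy => ?_)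
            exact_mod_cast Nat.cast_le.mpr (hlow y hy)
        _ ≤ (B.card : ℝ) := by exact_mod_cast Nat.cast_le.mpr key
    -- put everything together
    have hpm : 0 ≤ p m := hp m (Nat.lt_succ_self m)
    have hAle : (A.card : ℝ) ≤ p m * (B.card : ℝ) := by
      calc (A.card : ℝ) = ∑ y ∈ img, ((A.filter fun x => φ x = y).card : ℝ) := by
            rw [hAcard]; push_cast; rfl
        _ ≤ ∑ _y ∈ img, p m * 2 ^ (Q m).card := Finset.sum_le_sum hfib_le
        _ = p m * ((img.card : ℝ) * 2 ^ (Q m).card) := by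
            rw [Finset.sum_const, nsmul_eq_mul]; ring
        _ ≤ p m * (B.card : ℝ) := by
            exact mul_le_mul_of_nonneg_left hBge hpm
    have hBle : (B.card : ℝ) ≤ (∏ i ∈ range m, p i) * 2 ^ n := by
      apply ih
      · intro i hi; exact hp i (Nat.lt_succ_of_lt hi)
      · intro i hi x x' hagree hE
        refine hdep i (Nat.lt_succ_of_lt hi) x x' ?_ hE
        intro j hj
        apply hagree
        intro k hk hik
        exact hj k (Nat.lt_succ_of_lt hk) hik
      · intro i hi y
        exact hcond i (Nat.lt_succ_of_lt hi) y
    calc (A.card : ℝ) ≤ p m * (B.card : ℝ) := hAle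
      _ ≤ p m * ((∏ i ∈ range m, p i) * 2 ^ n) := mul_le_mul_of_nonneg_left hBle hpm
      _ = (∏ i ∈ range (m+1), p i) * 2 ^ n := by
          rw [Finset.prod_range_succ]; ring

theorem main_bound (n S : ℕ) (hS : 0 < S) (v : Fin n → ℝ) (P : ℕ → Finset (Fin n))
    (hcover : ∀ j : Fin n, ∃! s : ℕ, s < S ∧ j ∈ P s)
    (hscale : ∀ s : ℕ, s + 1 < S →
      4 * (4.706:ℝ)^2 * scaleNorm v (P (s+1)) ≤ scaleNorm v (P s))
    (δ : ℝ) (hδ : δ = scaleNorm v (P (S-1))) (hδ0 : 0 < δ)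
    (a b : ℝ) (hb : 2 ≤ b) :
    ((univ.filter fun x : Fin n → Fin 2 =>
        |(∑ j, ((x j : ℕ):ℝ) * v j) - a| < b*δ).card : ℝ)
      ≤ 9 * b * (0.95:ℝ)^S * 2^n := by
  classical
  set C₁ : ℝ := 4 * (4.706:ℝ)^2 with hC₁
  have hC₁88 : (88:ℝ) ≤ C₁ := by rw [hC₁]; norm_num
  set w : ℕ → ℝ := fun s => scaleNorm v (P s) with hw
  have hw0 : ∀ s, 0 ≤ w s := fun s => Real.sqrt_nonneg _
  -- geometric decay of the scales
  have hgeom : ∀ d t : ℕ, t + d < S → C₁^d * w (t+d) ≤ w t := by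
    intro d
    induction d with
    | zero => intro t ht; simp
    | succ d ih =>
      intro t ht
      have h1 : C₁ * w (t+d+1) ≤ w (t+d) := hscale (t+d) (by omega)
      have h2 : C₁^d * w (t+d) ≤ w t := ih t (by omega)
      have hC0 : (0:ℝ) ≤ C₁^d := by positivity
      calc C₁^(d+1) * w (t+(d+1)) = C₁^d * (C₁ * w (t+d+1)) := by
            rw [pow_succ]; ring_nf
        _ ≤ C₁^d * w (t+d) := mul_le_mul_of_nonneg_left h1 hC0
        _ ≤ w t := h2
  have hwδ : ∀ s, s < S → C₁^(S-1-s) * δ ≤ w s := by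
    intro s hs
    have h := hgeom (S-1-s) s (by omega)
    have he : s + (S-1-s) = S - 1 := by omega
    rw [he] at h
    rw [hδ]
    exact h
  have hwpos : ∀ s, s < S → 0 < w s := by
    intro s hs
    have h := hwδ s hs
    have : (0:ℝ) < C₁^(S-1-s) * δ := by positivity
    linarith
  -- disjointness of scales
  have hdisj : ∀ s t : ℕ, s < S → t < S → s ≠ t → ∀ j, j ∈ P s → j ∉ P t := by
    intro s t hsS htS hst j hjs hjt
    obtain ⟨u, _, huniq⟩ := hcover j
    exact hst ((huniq s ⟨hsS, hjs⟩).trans (huniq t ⟨htS, hjt⟩).symm)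
  -- covering: total sum decomposes into scales
  set Y : ℕ → (Fin n → Fin 2) → ℝ := fun s x => ∑ j ∈ P s, ((x j : ℕ):ℝ) * v j with hY
  have hcoverU : Finset.univ = (Finset.range S).biUnion P := by
    apply Finset.ext
    intro j
    simp only [Finset.mem_univ, true_iff, Finset.mem_biUnion, Finset.mem_range]
    obtain ⟨s, ⟨hsS, hjs⟩, _⟩ := hcover j
    exact ⟨s, hsS, hjs⟩
  have hXsum : ∀ x : Fin n → Fin 2,
      (∑ j, ((x j : ℕ):ℝ) * v j) = ∑ s ∈ range S, Y s x := by
    intro x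
    rw [hcoverU]
    refine Finset.sum_biUnion ?_
    intro s hs t ht hst
    refine Finset.disjoint_left.mpr (fun {j} hjs hjt => ?_)
    exact hdisj s t (Finset.mem_range.mp (Finset.mem_coe.mp hs))
      (Finset.mem_range.mp (Finset.mem_coe.mp ht)) hst j hjs hjt
  -- second block: definitions of dev, K, G, H, pinning
  set μ : ℕ → ℝ := fun s => (∑ j ∈ P s, v j)/2 with hμ
  set dev : ℕ → (Fin n → Fin 2) → ℝ := fun s x => |Y s x - μ s| with hdev
  set KK : (Fin n → Fin 2) → ℕ → ℕ :=
    fun x u => ((Finset.Icc 1 u).filter (fun k => 3 * 2^k * w u < dev u x)).card with hKK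
  set cc : ℕ → (Fin n → Fin 2) → ℝ :=
    fun s x => a - (∑ u ∈ range s, Y u x) - (∑ u ∈ Ioo s S, μ u) with hcc
  have hKle : ∀ x u, KK x u ≤ u := by
    intro x u
    calc KK x u ≤ (Finset.Icc 1 u).card := Finset.card_filter_le _ _
      _ = u := by rw [Nat.card_Icc]; omega
  have hKdev : ∀ x u, u < S → 1 ≤ KK x u → 3*2^(KK x u) * w u < dev u x := by
    intro x u huS hK1
    by_contra hcon
    push_neg at hcon
    have hsub : (Finset.Icc 1 u).filter (fun k => 3 * 2^k * w u < dev u x)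
        ⊆ Finset.Icc 1 (KK x u - 1) := by
      intro k hk
      rw [Finset.mem_filter, Finset.mem_Icc] at hk
      rw [Finset.mem_Icc]
      refine ⟨hk.1.1, ?_⟩
      by_contra hk2
      push_neg at hk2
      have hge : KK x u ≤ k := by omega
      have h2 : (2:ℝ)^(KK x u) ≤ 2^k := by
        apply pow_le_pow_right₀ (by norm_num) hge
      have hwu := hwpos u huS
      nlinarith [hk.2, hcon]
    have hcard := Finset.card_le_card hsub
    rw [Nat.card_Icc] at hcard
    have hKKeq : KK x u = ((Finset.Icc 1 u).filter (fun k => 3 * 2^k * w u < dev u x)).card := rfl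
    omega
  have hKbound : ∀ x u d, u < S → 1 ≤ d → d ≤ u → KK x u < d → dev u x ≤ 3*2^d * w u := by
    intro x u d huS hd1 hdu hKd
    by_contra hcon
    push_neg at hcon
    have hsub : Finset.Icc 1 d ⊆ (Finset.Icc 1 u).filter (fun k => 3 * 2^k * w u < dev u x) := by
      intro k hk
      rw [Finset.mem_Icc] at hk
      rw [Finset.mem_filter, Finset.mem_Icc]
      refine ⟨⟨hk.1, le_trans hk.2 hdu⟩, ?_⟩
      have h2 : (2:ℝ)^k ≤ 2^d := by
        apply pow_le_pow_right₀ (by norm_num) hk.2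
      have hwu := hwpos u huS
      nlinarith [hcon]
    have hcard := Finset.card_le_card hsub
    rw [Nat.card_Icc] at hcard
    have hKKeq : KK x u = ((Finset.Icc 1 u).filter (fun k => 3 * 2^k * w u < dev u x)).card := rfl
    omega
  set G : Finset ℕ := (range S).filter (fun s => 8*b*δ ≤ w s) with hGdef
  -- geometric tail bound
  have hgeosum : ∀ s, s < S → ∑ u ∈ Ioo s S, (1/4:ℝ)^(u-s-1) ≤ 4/3 := by
    intro s hs
    have hre : ∑ u ∈ Ioo s S, (1/4:ℝ)^(u-s-1) = ∑ k ∈ range (S-s-1), (1/4:ℝ)^k := by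
      apply Finset.sum_nbij' (fun u => u - s - 1) (fun k => k + s + 1)
      · intro u hu
        rw [Finset.mem_Ioo] at hu
        rw [Finset.mem_range]
        omega
      · intro k hk
        rw [Finset.mem_range] at hk
        rw [Finset.mem_Ioo]
        omega
      · intro u hu
        rw [Finset.mem_Ioo] at hu
        omega
      · intro k hk
        omega
      · intro u hu
        rfl
    rw [hre]
    have hgeo := geom_sum_eq (by norm_num : (1/4:ℝ) ≠ 1) (S-s-1)
    rw [hgeo]
    have hp : (0:ℝ) ≤ (1/4:ℝ)^(S-s-1) := by positivity
    have hp1 : (1/4:ℝ)^(S-s-1) ≤ 1 := by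
      apply pow_le_one₀ <;> norm_num
    rw [div_le_iff_of_neg (by norm_num : (1/4:ℝ) - 1 < 0)]
    linarith
  have htail : ∀ s x, s < S → (∀ u, u ∈ Ioo s S → dev u x ≤ 3*2^(u-s)*w u) →
      ∑ u ∈ Ioo s S, dev u x ≤ (8/C₁) * w s := by
    intro s x hsS hdevs
    have hCpos : (0:ℝ) < C₁ := by linarith
    have hterm : ∀ u ∈ Ioo s S, dev u x ≤ (6/C₁) * (1/4:ℝ)^(u-s-1) * w s := by
      intro u hu
      rw [Finset.mem_Ioo] at hu
      have h1 : dev u x ≤ 3*2^(u-s)*w u := hdevs u (by rw [Finset.mem_Ioo]; exact hu)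
      have h2 : C₁^(u-s) * w u ≤ w s := by
        have := hgeom (u-s) s (by omega)
        have he : s + (u-s) = u := by omega
        rwa [he] at this
      have hd1 : 1 ≤ u - s := by omega
      have hwu : 0 ≤ w u := hw0 u
      obtain ⟨d', hd'⟩ : ∃ d', u - s = d' + 1 := ⟨u - s - 1, by omega⟩
      have hd'' : u - s - 1 = d' := by omega
      rw [hd'] at h1 h2
      rw [hd'']
      have hpow : (2:ℝ)^d' ≤ (C₁/4)^d' :=
        pow_le_pow_left₀ (by norm_num) (by linarith) _
      have key : 3*(2:ℝ)^(d'+1)*w u ≤ (6/C₁) * (1/4:ℝ)^d' * w s := by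
        have e1 : 3*(2:ℝ)^(d'+1)*w u = 6 * (2:ℝ)^d' * w u := by
          rw [pow_succ]; ring
        have e2 : (6:ℝ) * (2:ℝ)^d' * w u ≤ 6 * (C₁/4)^d' * w u := by
          nlinarith [hpow, hwu]
        have e3 : (6:ℝ) * (C₁/4)^d' * w u = (6/C₁) * (1/4:ℝ)^d' * (C₁^(d'+1) * w u) := by
          rw [pow_succ, div_pow, div_pow]
          field_simp
          ring
        have e4 : (6/C₁) * (1/4:ℝ)^d' * (C₁^(d'+1) * w u)
            ≤ (6/C₁) * (1/4:ℝ)^d' * w s := by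
          apply mul_le_mul_of_nonneg_left h2
          have : (0:ℝ) ≤ (1/4:ℝ)^d' := by positivity
          have h6 : (0:ℝ) ≤ 6/C₁ := div_nonneg (by norm_num) (le_of_lt hCpos)
          positivity
        linarith
      linarith
    calc ∑ u ∈ Ioo s S, dev u x ≤ ∑ u ∈ Ioo s S, (6/C₁) * (1/4:ℝ)^(u-s-1) * w s :=
          Finset.sum_le_sum hterm
      _ = (6/C₁) * w s * ∑ u ∈ Ioo s S, (1/4:ℝ)^(u-s-1) := by
          rw [Finset.mul_sum]
          exact Finset.sum_congr rfl (fun u _ => by ring)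
      _ ≤ (6/C₁) * w s * (4/3) := by
          apply mul_le_mul_of_nonneg_left (hgeosum s hsS)
          exact mul_nonneg (div_nonneg (by norm_num) (le_of_lt hCpos)) (hw0 s)
      _ = (8/C₁) * w s := by ring
  -- the pinning estimate
  have hpin : ∀ s x, s ∈ G → (|(∑ j, ((x j : ℕ):ℝ) * v j) - a| < b*δ) →
      (∀ u, u ∈ Ioo s S → dev u x ≤ 3*2^(u-s)*w u) → |Y s x - cc s x| < w s / 4 := by
    intro s x hsG hev hdevs
    rw [hGdef, Finset.mem_filter, Finset.mem_range] at hsG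
    obtain ⟨hsS, hsw⟩ := hsG
    have hCpos : (0:ℝ) < C₁ := by linarith
    -- decompose the total sum
    have hsplit : (∑ j, ((x j : ℕ):ℝ) * v j)
        = (∑ u ∈ range s, Y u x) + Y s x + ∑ u ∈ Ioo s S, Y u x := by
      rw [hXsum x]
      rw [Finset.range_eq_Ico, ← Finset.sum_Ico_consecutive _ (Nat.zero_le s) (le_of_lt hsS)]
      rw [Finset.sum_eq_sum_Ico_succ_bot hsS]
      rw [Finset.Ico_add_one_left_eq_Ioo, ← Finset.range_eq_Ico]
      ring
    have hid : Y s x - cc s x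
        = ((∑ j, ((x j : ℕ):ℝ) * v j) - a) - ∑ u ∈ Ioo s S, (Y u x - μ u) := by
      rw [hcc]
      simp only
      rw [hsplit, Finset.sum_sub_distrib]
      ring
    have habs : |Y s x - cc s x| ≤ b*δ + ∑ u ∈ Ioo s S, dev u x := by
      rw [hid]
      calc |((∑ j, ((x j : ℕ):ℝ) * v j) - a) - ∑ u ∈ Ioo s S, (Y u x - μ u)|
          ≤ |(∑ j, ((x j : ℕ):ℝ) * v j) - a| + |∑ u ∈ Ioo s S, (Y u x - μ u)| := abs_sub _ _
        _ ≤ |(∑ j, ((x j : ℕ):ℝ) * v j) - a| + ∑ u ∈ Ioo s S, dev u x := by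
            have := Finset.abs_sum_le_sum_abs (fun u => Y u x - μ u) (Ioo s S)
            rw [hdev]
            simp only
            linarith
        _ ≤ b*δ + ∑ u ∈ Ioo s S, dev u x := by linarith [le_of_lt hev]
    have htl := htail s x hsS hdevs
    have hb0 : (0:ℝ) < b := by linarith
    have hbδ : b * δ ≤ w s / 8 := by
      nlinarith [hsw]
    have h8C : (8/C₁) * w s ≤ w s / 11 := by
      have hws : 0 ≤ w s := hw0 s
      rw [div_mul_eq_mul_div, div_le_div_iff₀ hCpos (by norm_num : (0:ℝ) < 11)]
      nlinarith [hws, hC₁88]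
    have hwsp := hwpos s hsS
    calc |Y s x - cc s x| ≤ b*δ + ∑ u ∈ Ioo s S, dev u x := habs
      _ ≤ w s / 8 + (8/C₁) * w s := by linarith
      _ ≤ w s / 8 + w s / 11 := by linarith
      _ < w s / 4 := by linarith
  -- bridge between scale sums and the cube lemmas
  have hYW : ∀ i, ∀ x : Fin n → Fin 2,
      Y i x - μ i = Wf (fun j : {j // j ∈ P i} => v j.1) Finset.univ (fun j => x j.1) := by
    intro i x
    rw [Wf]
    have h1 : ∑ j : {j // j ∈ P i}, (((x j.1 : ℕ):ℝ) - 1/2) * v j.1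
        = ∑ j ∈ P i, (((x j : ℕ):ℝ) - 1/2) * v j :=
      Finset.sum_coe_sort (P i) (fun j => (((x j : ℕ):ℝ) - 1/2) * v j)
    rw [h1]
    have h2 : ∑ j ∈ P i, (((x j : ℕ):ℝ) - 1/2) * v j
        = (∑ j ∈ P i, ((x j : ℕ):ℝ) * v j) - ∑ j ∈ P i, v j / 2 := by
      rw [← Finset.sum_sub_distrib]
      exact Finset.sum_congr rfl (fun j _ => by ring)
    rw [h2, hY, hμ]
    simp only
    rw [← Finset.sum_div]
  have hqsum : ∀ i, (∑ j : {j // j ∈ P i}, (v j.1)^2) = ∑ j ∈ P i, (v j)^2 :=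
    fun i => Finset.sum_coe_sort (P i) (fun j => (v j)^2)
  have hwsq : ∀ i, i < S → (∑ j : {j // j ∈ P i}, (v j.1)^2) = (w i)^2 := by
    intro i hi
    rw [hqsum i, hw]
    simp only
    rw [scaleNorm, Real.sq_sqrt (Finset.sum_nonneg (fun j _ => sq_nonneg _))]
  have hqpos : ∀ i, i < S → 0 < (∑ j : {j // j ∈ P i}, (v j.1)^2) := by
    intro i hi
    rw [hwsq i hi]
    exact pow_pos (hwpos i hi) 2
  have hcardcoe : ∀ i, Fintype.card {j // j ∈ P i} = (P i).card := fun i => Fintype.card_coe _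
  -- per-κ peeling bound
  set ρ : ℝ := 29/32 with hρ
  set ffun : ℕ → ℝ := fun k => if 1 ≤ k then (1/36) * (256/841:ℝ)^k else 1 with hffun
  have hperκ : ∀ κ : ℕ → ℕ,
      ((univ.filter fun x : Fin n → Fin 2 =>
          (|(∑ j, ((x j : ℕ):ℝ) * v j) - a| < b*δ) ∧ ∀ u, u < S → KK x u = κ u).card : ℝ)
        ≤ ρ^(G.card) * (∏ u ∈ range S, ffun (κ u)) * 2^n := by
    intro κ
    set Hf : Finset ℕ := (range S).filter (fun s => ∃ u ∈ Ioo s S, u - s ≤ κ u) with hHf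
    set pfun : ℕ → ℝ := fun s =>
      if 1 ≤ κ s then (1/36) * (1/4:ℝ)^(κ s)
      else if s ∈ G ∧ s ∉ Hf then ρ else 1 with hpfun
    set Eev : ℕ → (Fin n → Fin 2) → Prop := fun s x =>
      if 1 ≤ κ s then 3*2^(κ s) * w s < dev s x
      else if s ∈ G ∧ s ∉ Hf then |Y s x - cc s x| < w s/4 else True with hEev
    -- Step 1 : inclusion into the peel event
    have hincl : (univ.filter fun x : Fin n → Fin 2 =>
          (|(∑ j, ((x j : ℕ):ℝ) * v j) - a| < b*δ) ∧ ∀ u, u < S → KK x u = κ u)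
        ⊆ (univ.filter fun x : Fin n → Fin 2 => ∀ i < S, Eev i x) := by
      intro x hx
      rw [Finset.mem_filter] at hx ⊢
      obtain ⟨_, hev, hKs⟩ := hx
      refine ⟨Finset.mem_univ _, ?_⟩
      intro i hiS
      rw [hEev]
      simp only
      by_cases h1 : 1 ≤ κ i
      · rw [if_pos h1]
        have := hKdev x i hiS (by rw [hKs i hiS]; exact h1)
        rwa [hKs i hiS] at this
      · rw [if_neg h1]
        by_cases h2 : i ∈ G ∧ i ∉ Hf
        · rw [if_pos h2]
          apply hpin i x h2.1 hev
          intro u hu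
          rw [Finset.mem_Ioo] at hu
          have hKu : KK x u = κ u := hKs u hu.2
          have hκu : κ u < u - i := by
            by_contra hcon
            push_neg at hcon
            exact h2.2 (by
              rw [hHf, Finset.mem_filter, Finset.mem_range]
              exact ⟨lt_trans hu.1 hu.2, u, by rw [Finset.mem_Ioo]; exact hu, hcon⟩)
          exact hKbound x u (u - i) hu.2 (by omega) (by omega) (by omega)
        · rw [if_neg h2]
          trivial
    -- Step 2 : peeling
    have hpeel : ((univ.filter fun x : Fin n → Fin 2 => ∀ i < S, Eev i x).card : ℝ)
        ≤ (∏ i ∈ range S, pfun i) * 2^n := by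
      apply peel S P Eev pfun
      · -- nonnegativity
        intro i _
        rw [hpfun]
        simp only
        split_ifs
        · positivity
        · rw [hρ]; norm_num
        · norm_num
      · -- dependence
        intro i hiS x x' hagree hE
        have hco : ∀ u, u ≤ i → ∀ j ∈ P u, x j = x' j := by
          intro u hui j hj
          apply hagree
          intro k hkS hik
          intro hjk
          exact hdisj u k (lt_of_le_of_lt hui hiS) hkS (by omega) j hj hjk
        have hYeq : ∀ u, u ≤ i → Y u x = Y u x' := by
          intro u hui
          rw [hY]
          exact Finset.sum_congr rfl (fun j hj => by rw [hco u hui j hj])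
        have hdeveq : dev i x = dev i x' := by
          rw [hdev]
          simp only
          rw [hYeq i le_rfl]
        have hcceq : cc i x = cc i x' := by
          rw [hcc]
          simp only
          congr 1
          congr 1
          exact Finset.sum_congr rfl (fun u hu =>
            hYeq u (le_of_lt (Finset.mem_range.mp hu)))
        simp only [hEev] at hE ⊢
        split_ifs at hE ⊢ with h1 h2
        · rwa [← hdeveq]
        · rwa [← hYeq i le_rfl, ← hcceq]
      · -- conditional bounds
        intro i hiS y
        simp only [hEev, hpfun]
        by_cases h1 : 1 ≤ κ i
        · simp only [if_pos h1]
          -- Chebyshev case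
          have hτ : (0:ℝ) < 3*2^(κ i) * w i := by
            have := hwpos i hiS
            positivity
          set c : {j // j ∈ P i} → ℝ := fun j => v j.1 with hc
          have hcyl := card_cyl_le (P i) y (fun x => 3*2^(κ i) * w i < dev i x)
            (Finset.univ.filter fun ε : {j // j ∈ P i} → Fin 2 =>
              3*2^(κ i) * w i < |Wf c Finset.univ ε|)
            (by
              intro x hoff hpred
              rw [Finset.mem_filter]
              refine ⟨Finset.mem_univ _, ?_⟩
              have := hYW i x
              rw [hdev] at hpred
              simp only at hpred
              rw [this] at hpred
              exact hpred)
          have hdevle := card_dev_le c hτ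
          have hcast : ((univ.filter fun x : Fin n → Fin 2 =>
              (3*2^(κ i) * w i < dev i x) ∧ ∀ j ∉ P i, x j = y j).card : ℝ)
              ≤ ((Finset.univ.filter fun ε : {j // j ∈ P i} → Fin 2 =>
                3*2^(κ i) * w i < |Wf c Finset.univ ε|).card : ℝ) := by
            exact_mod_cast Nat.cast_le.mpr hcyl
          refine le_trans hcast (le_trans hdevle ?_)
          rw [hcardcoe i]
          have hsum : (∑ j : {j // j ∈ P i}, (c j)^2) = (w i)^2 := hwsq i hiS
          rw [hsum]
          have hwp := hwpos i hiS
          have h4 : (0:ℝ) < (4:ℝ)^(κ i) := by positivity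
          have heq : (w i)^2 / (4 * (3*2^(κ i) * w i)^2) = (1/36) * (1/4:ℝ)^(κ i) := by
            have h2κ : ((2:ℝ)^(κ i))^2 = 4^(κ i) := by
              rw [← pow_mul, pow_mul']
              norm_num
            field_simp
            rw [h2κ, mul_assoc, ← mul_pow]
            norm_num
          rw [heq]
        · simp only [if_neg h1]
          by_cases h2 : i ∈ G ∧ i ∉ Hf
          · simp only [if_pos h2]
            -- interval case
            set c : {j // j ∈ P i} → ℝ := fun j => v j.1 with hc
            have hq := hqpos i hiS
            have hcyl := card_cyl_le (P i) y (fun x => |Y i x - cc i x| < w i/4)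
              (Finset.univ.filter fun ε : {j // j ∈ P i} → Fin 2 =>
                |Wf c Finset.univ ε - (cc i y - μ i)| < Real.sqrt (∑ j : {j // j ∈ P i}, (c j)^2)/4)
              (by
                intro x hoff hpred
                rw [Finset.mem_filter]
                refine ⟨Finset.mem_univ _, ?_⟩
                have hWx := hYW i x
                have hcceq : cc i x = cc i y := by
                  rw [hcc]
                  simp only
                  congr 1
                  congr 1
                  refine Finset.sum_congr rfl (fun u hu => ?_)
                  rw [hY]
                  refine Finset.sum_congr rfl (fun j hj => ?_)
                  rw [hoff j (hdisj u i (lt_trans (Finset.mem_range.mp hu) hiS) hiS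
                    (by have := Finset.mem_range.mp hu; omega) j hj)]
                have hsq : Real.sqrt (∑ j : {j // j ∈ P i}, (c j)^2) = w i := by
                  rw [hwsq i hiS]
                  exact Real.sqrt_sq (hw0 i)
                rw [hsq]
                have : Wf c Finset.univ (fun j => x j.1) - (cc i y - μ i)
                    = Y i x - cc i x := by
                  rw [← hWx, hcceq]; ring
                rw [this]
                exact hpred)
            have hint := card_interval_le c hq (cc i y - μ i)
            have hcast : ((univ.filter fun x : Fin n → Fin 2 =>
                (|Y i x - cc i x| < w i/4) ∧ ∀ j ∉ P i, x j = y j).card : ℝ)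
                ≤ ((Finset.univ.filter fun ε : {j // j ∈ P i} → Fin 2 =>
                  |Wf c Finset.univ ε - (cc i y - μ i)|
                    < Real.sqrt (∑ j : {j // j ∈ P i}, (c j)^2)/4).card : ℝ) := by
              exact_mod_cast Nat.cast_le.mpr hcyl
            refine le_trans hcast (le_trans hint ?_)
            rw [hcardcoe i, hρ]
          · simp only [if_neg h2]
            -- trivial case
            have hcyl := card_cyl_le (P i) y (fun _ => True)
              (Finset.univ : Finset ({j // j ∈ P i} → Fin 2))
              (by intro x _ _; exact Finset.mem_univ _)
            have : ((univ.filter fun x : Fin n → Fin 2 =>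
                True ∧ ∀ j ∉ P i, x j = y j).card : ℝ)
                ≤ ((Finset.univ : Finset ({j // j ∈ P i} → Fin 2)).card : ℝ) := by
              exact_mod_cast Nat.cast_le.mpr hcyl
            rw [Finset.card_univ, Fintype.card_fun, Fintype.card_fin, hcardcoe i] at this
            calc ((univ.filter fun x : Fin n → Fin 2 =>
                True ∧ ∀ j ∉ P i, x j = y j).card : ℝ) ≤ (2^(P i).card : ℕ) := this
              _ = 2^(P i).card := by push_cast; ring
              _ = 1 * 2^(P i).card := by ring
    -- Step 3 : bound the product of the peel weights
    have hprod : (∏ i ∈ range S, pfun i)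
        ≤ ρ^(G.card) * (∏ u ∈ range S, ffun (κ u)) := by
      set KS := ∑ u ∈ range S, κ u with hKS
      set Dset := (range S).filter (fun s => 1 ≤ κ s) with hDsetdef
      set Aset := ((range S).filter (fun s => ¬ 1 ≤ κ s)).filter
        (fun s => s ∈ G ∧ s ∉ Hf) with hAsetdef
      -- decompose the product of peel weights
      have hsplit1 : ∏ i ∈ range S, pfun i
          = (∏ s ∈ Dset, pfun s) * ∏ s ∈ (range S).filter (fun s => ¬ 1 ≤ κ s), pfun s :=
        (Finset.prod_filter_mul_prod_filter_not (range S) (fun s => 1 ≤ κ s) pfun).symm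
      have hsplit2 : ∏ s ∈ (range S).filter (fun s => ¬ 1 ≤ κ s), pfun s
          = (∏ s ∈ Aset, pfun s) *
            ∏ s ∈ ((range S).filter (fun s => ¬ 1 ≤ κ s)).filter (fun s => ¬(s ∈ G ∧ s ∉ Hf)), pfun s := by
        rw [hAsetdef]
        exact (Finset.prod_filter_mul_prod_filter_not _ (fun s => s ∈ G ∧ s ∉ Hf) pfun).symm
      have hD : ∏ s ∈ Dset, pfun s = ∏ s ∈ Dset, (1/36) * (1/4:ℝ)^(κ s) := by
        refine Finset.prod_congr rfl (fun s hs => ?_)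
        rw [hDsetdef, Finset.mem_filter] at hs
        rw [hpfun]
        simp only [if_pos hs.2]
      have hA : ∏ s ∈ Aset, pfun s = ρ^(Aset.card) := by
        rw [Finset.prod_congr rfl (fun s hs => ?_), Finset.prod_const]
        rw [hAsetdef, Finset.mem_filter, Finset.mem_filter] at hs
        rw [hpfun]
        simp only [if_neg hs.1.2, if_pos hs.2]
      have hT1 : ∏ s ∈ ((range S).filter (fun s => ¬ 1 ≤ κ s)).filter (fun s => ¬(s ∈ G ∧ s ∉ Hf)), pfun s = 1 := by
        refine Finset.prod_eq_one (fun s hs => ?_)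
        rw [Finset.mem_filter, Finset.mem_filter] at hs
        rw [hpfun]
        simp only [if_neg hs.1.2, if_neg hs.2]
      -- decompose the product of ffun
      have hsplitf : ∏ u ∈ range S, ffun (κ u)
          = (∏ s ∈ Dset, ffun (κ s)) * ∏ s ∈ (range S).filter (fun s => ¬ 1 ≤ κ s), ffun (κ s) :=
        (Finset.prod_filter_mul_prod_filter_not (range S) (fun s => 1 ≤ κ s) (fun s => ffun (κ s))).symm
      have hTf : ∏ s ∈ (range S).filter (fun s => ¬ 1 ≤ κ s), ffun (κ s) = 1 := by
        refine Finset.prod_eq_one (fun s hs => ?_)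
        rw [Finset.mem_filter] at hs
        rw [hffun]
        simp only [if_neg hs.2]
      have hDf : ∏ s ∈ Dset, ffun (κ s)
          = (∏ s ∈ Dset, (1/36) * (1/4:ℝ)^(κ s)) * (1024/841:ℝ)^KS := by
        have h1 : ∏ s ∈ Dset, ffun (κ s)
            = ∏ s ∈ Dset, ((1/36) * (1/4:ℝ)^(κ s) * (1024/841:ℝ)^(κ s)) := by
          refine Finset.prod_congr rfl (fun s hs => ?_)
          rw [hDsetdef, Finset.mem_filter] at hs
          rw [hffun]
          simp only [if_pos hs.2]
          rw [mul_assoc, ← mul_pow]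
          norm_num
        rw [h1, Finset.prod_mul_distrib, Finset.prod_pow_eq_pow_sum]
        have hsum : ∑ s ∈ Dset, κ s = KS := by
          rw [hKS, hDsetdef]
          exact Finset.sum_filter_of_ne (fun s _ hne => by omega)
        rw [hsum]
      -- the counting inequality
      have hcount : G.card ≤ Aset.card + 2 * KS := by
        have hAG : Aset ⊆ G := by
          intro s hs
          rw [hAsetdef, Finset.mem_filter] at hs
          exact hs.2.1
        have hsd : (G \ Aset).card = G.card - Aset.card := Finset.card_sdiff_of_subset hAG
        have hsub : G \ Aset ⊆ Dset ∪ Hf := by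
          intro s hs
          rw [Finset.mem_sdiff] at hs
          obtain ⟨hsG, hsA⟩ := hs
          rw [Finset.mem_union]
          by_cases h1 : 1 ≤ κ s
          · left
            rw [hDsetdef, Finset.mem_filter]
            have : s ∈ range S := by
              rw [hGdef, Finset.mem_filter] at hsG
              exact hsG.1
            exact ⟨this, h1⟩
          · right
            by_contra hsHf
            apply hsA
            rw [hAsetdef, Finset.mem_filter, Finset.mem_filter]
            have hsr : s ∈ range S := by
              rw [hGdef, Finset.mem_filter] at hsG
              exact hsG.1
            exact ⟨⟨hsr, h1⟩, hsG, hsHf⟩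
        have hDcard : Dset.card ≤ KS := by
          have h1 : Dset.card • 1 ≤ ∑ s ∈ Dset, κ s :=
            Finset.card_nsmul_le_sum Dset κ 1 (fun s hs => by
              rw [hDsetdef, Finset.mem_filter] at hs; exact hs.2)
          have h2 : ∑ s ∈ Dset, κ s ≤ KS := by
            rw [hKS]
            exact Finset.sum_le_sum_of_subset (Finset.filter_subset _ _)
          simpa using le_trans h1 h2
        have hHcard : Hf.card ≤ KS := by
          have hsub2 : Hf ⊆ (range S).biUnion (fun u => Finset.Ico (u - κ u) u) := by
            intro s hs
            rw [hHf, Finset.mem_filter] at hs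
            obtain ⟨u, hu, hus⟩ := hs.2
            rw [Finset.mem_Ioo] at hu
            rw [Finset.mem_biUnion]
            exact ⟨u, Finset.mem_range.mpr hu.2, by rw [Finset.mem_Ico]; omega⟩
          calc Hf.card ≤ ((range S).biUnion (fun u => Finset.Ico (u - κ u) u)).card :=
                Finset.card_le_card hsub2
            _ ≤ ∑ u ∈ range S, (Finset.Ico (u - κ u) u).card := Finset.card_biUnion_le
            _ ≤ ∑ u ∈ range S, κ u := by
                refine Finset.sum_le_sum (fun u _ => ?_)
                rw [Nat.card_Ico]
                omega
            _ = KS := by rw [hKS]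
        have := Finset.card_le_card hsub
        have hcu := Finset.card_union_le Dset Hf
        omega
      -- put the product bounds together
      have hcore0 : (0:ℝ) ≤ ∏ s ∈ Dset, (1/36) * (1/4:ℝ)^(κ s) :=
        Finset.prod_nonneg (fun s _ => by positivity)
      have hkey : ρ^(Aset.card) ≤ ρ^(G.card) * (1024/841:ℝ)^KS := by
        have h1 : ρ^(Aset.card) * (841/1024:ℝ)^KS ≤ ρ^(G.card) := by
          have he : (841/1024:ℝ)^KS = (ρ^2)^KS := by
            rw [hρ]; norm_num
          rw [he, ← pow_mul, ← pow_add]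
          apply pow_le_pow_of_le_one (by rw [hρ]; norm_num) (by rw [hρ]; norm_num)
          omega
        have h2 : (0:ℝ) < (1024/841:ℝ)^KS := by positivity
        have hm : (841/1024:ℝ)^KS * (1024/841:ℝ)^KS = 1 := by
          rw [← mul_pow]
          norm_num
        calc ρ^(Aset.card)
            = ρ^(Aset.card) * (841/1024:ℝ)^KS * (1024/841:ℝ)^KS := by
              rw [mul_assoc, hm, mul_one]
          _ ≤ ρ^(G.card) * (1024/841:ℝ)^KS := by
              apply mul_le_mul_of_nonneg_right h1 (le_of_lt h2)
      calc ∏ i ∈ range S, pfun i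
          = (∏ s ∈ Dset, (1/36) * (1/4:ℝ)^(κ s)) * ρ^(Aset.card) := by
            rw [hsplit1, hsplit2, hD, hA, hT1]
            ring
        _ ≤ (∏ s ∈ Dset, (1/36) * (1/4:ℝ)^(κ s)) * (ρ^(G.card) * (1024/841:ℝ)^KS) :=
            mul_le_mul_of_nonneg_left hkey hcore0
        _ = ρ^(G.card) * ((∏ s ∈ Dset, (1/36) * (1/4:ℝ)^(κ s)) * (1024/841:ℝ)^KS) := by ring
        _ = ρ^(G.card) * ∏ u ∈ range S, ffun (κ u) := by
            rw [hsplitf, hTf, hDf]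
            ring
    have hle : ((univ.filter fun x : Fin n → Fin 2 =>
          (|(∑ j, ((x j : ℕ):ℝ) * v j) - a| < b*δ) ∧ ∀ u, u < S → KK x u = κ u).card : ℝ)
        ≤ (∏ i ∈ range S, pfun i) * 2^n := by
      refine le_trans ?_ hpeel
      exact_mod_cast Nat.cast_le.mpr (Finset.card_le_card hincl)
    calc ((univ.filter fun x : Fin n → Fin 2 =>
          (|(∑ j, ((x j : ℕ):ℝ) * v j) - a| < b*δ) ∧ ∀ u, u < S → KK x u = κ u).card : ℝ)
        ≤ (∏ i ∈ range S, pfun i) * 2^n := hle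
      _ ≤ ρ^(G.card) * (∏ u ∈ range S, ffun (κ u)) * 2^n := by
          apply mul_le_mul_of_nonneg_right hprod (by positivity)
  -- Step 4 : sum over all deviation patterns
  set Kmap : (Fin n → Fin 2) → (Fin S → Fin S) :=
    fun x u => ⟨KK x u.1, lt_of_le_of_lt (hKle x u.1) u.isLt⟩ with hKmap
  set κof : (Fin S → Fin S) → ℕ → ℕ :=
    fun κm u => if h : u < S then (κm ⟨u, h⟩ : ℕ) else 0 with hκof
  have hfib : ((univ.filter fun x : Fin n → Fin 2 =>
        |(∑ j, ((x j : ℕ):ℝ) * v j) - a| < b*δ).card : ℝ)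
      = ∑ κm : Fin S → Fin S, ((univ.filter fun x : Fin n → Fin 2 =>
          (|(∑ j, ((x j : ℕ):ℝ) * v j) - a| < b*δ) ∧ ∀ u, u < S → KK x u = κof κm u).card : ℝ) := by
    have hc := Finset.card_eq_sum_card_fiberwise
      (f := Kmap) (s := univ.filter fun x : Fin n → Fin 2 =>
        |(∑ j, ((x j : ℕ):ℝ) * v j) - a| < b*δ) (t := univ)
      (fun x _ => Finset.mem_univ _)
    have heq : ∀ κm : Fin S → Fin S,
        ((univ.filter fun x : Fin n → Fin 2 =>
          |(∑ j, ((x j : ℕ):ℝ) * v j) - a| < b*δ).filter (fun x => Kmap x = κm))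
        = (univ.filter fun x : Fin n → Fin 2 =>
          (|(∑ j, ((x j : ℕ):ℝ) * v j) - a| < b*δ) ∧ ∀ u, u < S → KK x u = κof κm u) := by
      intro κm
      rw [Finset.filter_filter]
      apply Finset.filter_congr
      intro x _
      constructor
      · rintro ⟨hev, hKm⟩
        refine ⟨hev, fun u hu => ?_⟩
        rw [hκof]
        simp only [dif_pos hu]
        have := congrFun hKm ⟨u, hu⟩
        exact congrArg Fin.val this
      · rintro ⟨hev, hKs⟩
        refine ⟨hev, funext fun u => ?_⟩
        apply Fin.ext
        have := hKs u.1 u.isLt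
        rw [hκof] at this
        simp only [dif_pos u.isLt] at this
        simpa [hKmap, Fin.eta] using this
    rw [hc]
    push_cast
    refine Finset.sum_congr rfl (fun κm _ => ?_)
    rw [heq κm]
  -- entropy factor
  have hsum104 : ∑ k ∈ range S, ffun k ≤ 26/25 := by
    rw [Finset.range_eq_Ico, Finset.sum_eq_sum_Ico_succ_bot hS]
    have hf0 : ffun 0 = 1 := by rw [hffun]; norm_num
    have h1 : ∑ k ∈ Finset.Ico 1 S, ffun k ≤ ∑ k ∈ Finset.Ico 1 S, (1/36) * (256/841:ℝ)^k := by
      refine Finset.sum_le_sum (fun k hk => ?_)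
      rw [Finset.mem_Ico] at hk
      rw [hffun]
      simp only [if_pos hk.1]
      exact le_rfl
    have h2 : ∑ k ∈ Finset.Ico 1 S, (1/36) * (256/841:ℝ)^k
        ≤ ∑ k ∈ range S, (1/36) * (256/841:ℝ)^k := by
      rw [Finset.range_eq_Ico]
      refine Finset.sum_le_sum_of_subset_of_nonneg ?_ (fun k _ _ => by positivity)
      exact Finset.Ico_subset_Ico (by omega) le_rfl
    have h3 : ∑ k ∈ range S, (1/36) * (256/841:ℝ)^k ≤ 1/25 := by
      rw [← Finset.mul_sum]
      have hbnd : ∑ k ∈ range S, (256/841:ℝ)^k ≤ 841/585 := by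
        rw [geom_sum_eq (by norm_num : (256/841:ℝ) ≠ 1) S]
        rw [div_le_iff_of_neg (by norm_num : (256/841:ℝ) - 1 < 0)]
        have hp1 : (0:ℝ) ≤ (256/841:ℝ)^S := by positivity
        nlinarith
      have := mul_le_mul_of_nonneg_left hbnd (by norm_num : (0:ℝ) ≤ 1/36)
      linarith
    linarith [hf0, h1, h2, h3]
  have hffun0 : ∀ k, 0 ≤ ffun k := by
    intro k
    simp only [hffun]
    split_ifs
    · positivity
    · norm_num
  have hentropy : ∑ κm : Fin S → Fin S, (∏ u ∈ range S, ffun (κof κm u)) ≤ (26/25:ℝ)^S := by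
    have hconv : ∀ κm : Fin S → Fin S,
        (∏ u ∈ range S, ffun (κof κm u)) = ∏ u : Fin S, ffun (κm u : ℕ) := by
      intro κm
      rw [← Fin.prod_univ_eq_prod_range (fun u => ffun (κof κm u)) S]
      refine Finset.prod_congr rfl (fun u _ => ?_)
      rw [hκof]
      simp only [dif_pos u.isLt, Fin.eta]
    rw [Finset.sum_congr rfl (fun κm _ => hconv κm)]
    have hps := Finset.prod_univ_sum (fun _ : Fin S => (univ : Finset (Fin S)))
      (fun _ k => ffun (k : ℕ))
    rw [Fintype.piFinset_univ] at hps
    rw [← hps]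
    have hone : ∀ i : Fin S, ∑ k : Fin S, ffun (k:ℕ) ≤ 26/25 := by
      intro i
      rw [Fin.sum_univ_eq_sum_range (fun k => ffun k) S]
      exact hsum104
    have hnn : (0:ℝ) ≤ ∑ k : Fin S, ffun (k:ℕ) :=
      Finset.sum_nonneg (fun k _ => hffun0 _)
    calc ∏ _i : Fin S, (∑ k : Fin S, ffun (k:ℕ))
        = (∑ k : Fin S, ffun (k:ℕ))^S := by
          rw [Finset.prod_const, Finset.card_univ, Fintype.card_fin]
      _ ≤ (26/25:ℝ)^S := pow_le_pow_left₀ hnn (hone ⟨0, hS⟩) S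
  -- the G-cardinality factor
  have hGS : G.card ≤ S := by
    calc G.card ≤ (range S).card := by
          rw [hGdef]; exact Finset.card_filter_le _ _
      _ = S := Finset.card_range S
  have hbadpow : (32/29:ℝ)^(S - G.card) ≤ (32/29) * (8*b) := by
    have hb0 : (0:ℝ) < b := by linarith
    rcases Finset.eq_empty_or_nonempty (range S \ G) with hemp | hne
    · have hcs := Finset.card_sdiff_of_subset (show G ⊆ range S by
        rw [hGdef]; exact Finset.filter_subset _ _)
      rw [hemp, Finset.card_empty, Finset.card_range] at hcs
      have hz : S - G.card = 0 := by omega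
      rw [hz, pow_zero]
      nlinarith
    · set s₀ := (range S \ G).min' hne with hs₀
      have hs₀mem : s₀ ∈ range S \ G := Finset.min'_mem _ hne
      rw [Finset.mem_sdiff, Finset.mem_range] at hs₀mem
      obtain ⟨hs₀S, hs₀G⟩ := hs₀mem
      have hws₀ : w s₀ < 8*b*δ := by
        by_contra hcon
        push_neg at hcon
        exact hs₀G (by rw [hGdef, Finset.mem_filter, Finset.mem_range]; exact ⟨hs₀S, hcon⟩)
      have hC8b : C₁^(S-1-s₀) < 8*b := by
        have h1 := hwδ s₀ hs₀S
        have h2 : C₁^(S-1-s₀) * δ < 8*b*δ := lt_of_le_of_lt h1 hws₀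
        have := lt_of_mul_lt_mul_right h2 hδ0.le
        exact this
      have hbadcard : S - G.card ≤ S - s₀ := by
        have hsub : range S \ G ⊆ Finset.Ico s₀ S := by
          intro t ht
          have htmem := ht
          rw [Finset.mem_sdiff, Finset.mem_range] at htmem
          rw [Finset.mem_Ico]
          exact ⟨Finset.min'_le _ t ht, htmem.1⟩
        have h1 : (range S \ G).card ≤ S - s₀ := by
          calc (range S \ G).card ≤ (Finset.Ico s₀ S).card := Finset.card_le_card hsub
            _ = S - s₀ := Nat.card_Ico _ _
        have h2 : (range S \ G).card = S - G.card := by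
          rw [Finset.card_sdiff_of_subset (by rw [hGdef]; exact Finset.filter_subset _ _),
            Finset.card_range]
        omega
      have hbad1 : 1 ≤ S - G.card ∨ S - G.card = 0 := by omega
      rcases hbad1 with hbad1 | hbad1
      · obtain ⟨m, hm⟩ : ∃ m, S - G.card = m + 1 := ⟨S - G.card - 1, by omega⟩
        rw [hm, pow_succ]
        have hmle : m ≤ S - 1 - s₀ := by omega
        have hp1 : (32/29:ℝ)^m ≤ C₁^m := by
          apply pow_le_pow_left₀ (by norm_num)
          linarith
        have hp2 : C₁^m ≤ C₁^(S-1-s₀) := by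
          apply pow_le_pow_right₀ (by linarith) hmle
        calc (32/29:ℝ)^m * (32/29) ≤ C₁^(S-1-s₀) * (32/29) := by
              apply mul_le_mul_of_nonneg_right (le_trans hp1 hp2) (by norm_num)
          _ ≤ (8*b) * (32/29) := by
              apply mul_le_mul_of_nonneg_right (le_of_lt hC8b) (by norm_num)
          _ = (32/29) * (8*b) := by ring
      · rw [hbad1, pow_zero]
        nlinarith
  have hρfact : ρ^(G.card) = (32/29:ℝ)^(S - G.card) * ρ^S := by
    have h1 : ρ^S = ρ^(G.card) * ρ^(S - G.card) := by
      rw [← pow_add]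
      congr 1
      omega
    have h2 : (32/29:ℝ)^(S - G.card) * ρ^(S - G.card) = 1 := by
      rw [← mul_pow, hρ]
      norm_num
    calc ρ^(G.card) = ρ^(G.card) * ((32/29:ℝ)^(S - G.card) * ρ^(S - G.card)) := by
          rw [h2, mul_one]
      _ = (32/29:ℝ)^(S - G.card) * (ρ^(G.card) * ρ^(S - G.card)) := by ring
      _ = (32/29:ℝ)^(S - G.card) * ρ^S := by rw [← h1]
  -- final combination
  have hρ0 : (0:ℝ) ≤ ρ := by rw [hρ]; norm_num
  have hb0 : (0:ℝ) < b := by linarith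
  calc ((univ.filter fun x : Fin n → Fin 2 =>
        |(∑ j, ((x j : ℕ):ℝ) * v j) - a| < b*δ).card : ℝ)
      = ∑ κm : Fin S → Fin S, ((univ.filter fun x : Fin n → Fin 2 =>
          (|(∑ j, ((x j : ℕ):ℝ) * v j) - a| < b*δ) ∧ ∀ u, u < S → KK x u = κof κm u).card : ℝ) := hfib
    _ ≤ ∑ κm : Fin S → Fin S, ρ^(G.card) * (∏ u ∈ range S, ffun (κof κm u)) * 2^n :=
        Finset.sum_le_sum (fun κm _ => hperκ (κof κm))
    _ = ρ^(G.card) * 2^n * ∑ κm : Fin S → Fin S, (∏ u ∈ range S, ffun (κof κm u)) := by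
        rw [Finset.mul_sum]
        exact Finset.sum_congr rfl (fun κm _ => by ring)
    _ ≤ ρ^(G.card) * 2^n * (26/25:ℝ)^S := by
        apply mul_le_mul_of_nonneg_left hentropy
        positivity
    _ = (32/29:ℝ)^(S - G.card) * (ρ^S * (26/25:ℝ)^S) * 2^n := by
        rw [hρfact]; ring
    _ ≤ ((32/29) * (8*b)) * (ρ^S * (26/25:ℝ)^S) * 2^n := by
        have hnn : (0:ℝ) ≤ ρ^S * (26/25:ℝ)^S * 2^n := by positivity
        have := mul_le_mul_of_nonneg_right hbadpow hnn
        calc (32/29:ℝ)^(S - G.card) * (ρ^S * (26/25:ℝ)^S) * 2^n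
            = (32/29:ℝ)^(S - G.card) * (ρ^S * (26/25:ℝ)^S * 2^n) := by ring
          _ ≤ ((32/29) * (8*b)) * (ρ^S * (26/25:ℝ)^S * 2^n) := this
          _ = ((32/29) * (8*b)) * (ρ^S * (26/25:ℝ)^S) * 2^n := by ring
    _ ≤ 9 * b * (0.95:ℝ)^S * 2^n := by
        have h1 : ρ^S * (26/25:ℝ)^S = (ρ * (26/25:ℝ))^S := by rw [mul_pow]
        have h2 : (ρ * (26/25:ℝ))^S ≤ (0.95:ℝ)^S := by
          apply pow_le_pow_left₀ (by rw [hρ]; norm_num)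
          rw [hρ]; norm_num
        have h3 : (32/29:ℝ) * (8*b) ≤ 9*b := by nlinarith
        have h4 : (0:ℝ) ≤ (ρ * (26/25:ℝ))^S := by positivity
        have h5 : (0:ℝ) < (2:ℝ)^n := by positivity
        rw [h1]
        calc ((32/29) * (8*b)) * ((ρ*(26/25:ℝ))^S) * 2^n
            ≤ (9*b) * ((ρ*(26/25:ℝ))^S) * 2^n :=
              mul_le_mul_of_nonneg_right
                (mul_le_mul_of_nonneg_right h3 h4) (le_of_lt h5)
          _ ≤ (9*b) * ((0.95:ℝ)^S) * 2^n := by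
              refine mul_le_mul_of_nonneg_right ?_ (le_of_lt h5)
              exact mul_le_mul_of_nonneg_left h2 (by nlinarith)
          _ = 9*b*(0.95:ℝ)^S*2^n := by ring


end AntiAux

/-- Anti-concentration for vectors with many scales: there is `C₂ > 1` such that if
`v ∈ ℝ^n` has `S` scales with smallest scale of size `δ > 0`, then for every `a ∈ ℝ`
and `b ≥ 2`, `ℙ(|⟨x,v⟩ - a| < bδ) < C₂ exp(-S/C₂ + C₂ log b)`. -/
theorem anticoncentration_many_scales :
    ∃ C₂ : ℝ, C₂ > 1 ∧ ∀ (n S : ℕ) (v : Fin n → ℝ) (P : ℕ → Finset (Fin n)),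
      0 < S → HasScalesOn v Finset.univ S P →
      ∀ δ : ℝ, δ = scaleNorm v (P (S - 1)) → 0 < δ →
      ∀ a b : ℝ, 2 ≤ b →
        cubeProb n {x | |∑ j, ((x j : ℕ) : ℝ) * v j - a| < b * δ}
          < C₂ * Real.exp (-(S : ℝ) / C₂ + C₂ * Real.log b) := by
  classical
  refine ⟨100, by norm_num, ?_⟩
  intro n S v P hS hsc δ hδ hδ0 a b hb
  obtain ⟨-, hcover0, hscale0⟩ := hsc
  have hcover : ∀ j : Fin n, ∃! s : ℕ, s < S ∧ j ∈ P s :=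
    fun j => hcover0 j (Finset.mem_univ j)
  have hscale : ∀ s : ℕ, s + 1 < S →
      4 * (4.706:ℝ)^2 * scaleNorm v (P (s+1)) ≤ scaleNorm v (P s) :=
    fun s hs => hscale0 s hs
  have hmain := AntiAux.main_bound n S hS v P hcover hscale δ hδ hδ0 a b hb
  have hb0 : (0:ℝ) < b := by linarith
  -- rewrite cubeProb as a filtered count
  have hset : {x : Fin n → Fin 2 | |∑ j, ((x j : ℕ) : ℝ) * v j - a| < b * δ}
      = ((Finset.univ.filter fun x : Fin n → Fin 2 =>
          |(∑ j, ((x j : ℕ):ℝ) * v j) - a| < b*δ : Finset (Fin n → Fin 2)) :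
        Set (Fin n → Fin 2)) := by
    ext x
    simp
  rw [cubeProb, hset, Set.ncard_coe_finset]
  have h2n : (0:ℝ) < 2^n := by positivity
  have hstep1 : ((Finset.univ.filter fun x : Fin n → Fin 2 =>
        |(∑ j, ((x j : ℕ):ℝ) * v j) - a| < b*δ).card : ℝ) / 2^n
      ≤ 9 * b * (0.95:ℝ)^S := by
    rw [div_le_iff₀ h2n]
    exact hmain
  -- compare with the exponential bound
  have hexp1 : (0.95:ℝ)^S ≤ Real.exp (-(S:ℝ)/100) := by
    have h1 : (0.95:ℝ) ≤ Real.exp (-(1/100)) := by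
      have := Real.add_one_le_exp (-(1/100):ℝ)
      linarith
    have h2 : (0.95:ℝ)^S ≤ (Real.exp (-(1/100)))^S :=
      pow_le_pow_left₀ (by norm_num) h1 S
    have h3 : (Real.exp (-(1/100):ℝ))^S = Real.exp (-(S:ℝ)/100) := by
      rw [← Real.exp_nat_mul]
      congr 1
      ring
    rw [← h3]
    exact h2
  have hb100 : 9 * b < 100 * b^(100:ℕ) := by
    have h1 : b ≤ b^(100:ℕ) := by
      calc b = b^(1:ℕ) := (pow_one b).symm
        _ ≤ b^(100:ℕ) := pow_le_pow_right₀ (by linarith) (by norm_num)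
    have h2 : (0:ℝ) < b^(100:ℕ) := by positivity
    nlinarith
  have hexp2 : Real.exp (-(S:ℝ)/100 + 100 * Real.log b)
      = Real.exp (-(S:ℝ)/100) * b^(100:ℕ) := by
    rw [Real.exp_add]
    congr 1
    rw [show (100:ℝ) * Real.log b = ((100:ℕ):ℝ) * Real.log b by norm_num]
    rw [Real.exp_nat_mul, Real.exp_log hb0]
  calc ((Finset.univ.filter fun x : Fin n → Fin 2 =>
        |(∑ j, ((x j : ℕ):ℝ) * v j) - a| < b*δ).card : ℝ) / 2^n
      ≤ 9 * b * (0.95:ℝ)^S := hstep1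
    _ ≤ 9 * b * Real.exp (-(S:ℝ)/100) := by
        apply mul_le_mul_of_nonneg_left hexp1 (by positivity)
    _ < 100 * b^(100:ℕ) * Real.exp (-(S:ℝ)/100) := by
        apply mul_lt_mul_of_pos_right hb100 (Real.exp_pos _)
    _ = 100 * Real.exp (-(S:ℝ)/100 + 100 * Real.log b) := by
        rw [hexp2]
        ring
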